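/- Let X = (0,∞) with Lebesgue measure, 1 ≤ a < b < ∞, and let ψ : (a,b) → (0,∞) be continuous with inf_{p∈(a,b)} ψ(p) > 0, with lim_{p→a+} ψ(p) = ∞ or lim_{p→b−} ψ(p) = ∞, and such that there exists a measurable f₀ : (0,∞) → ℝ with |f₀|_p = ψ(p) for every p ∈ (a,b). For s > 0 let σ_s g (x) = g(x/s) and M(s) = sup { ‖σ_s g‖_{SL(ψ)} : g measurable, ‖g‖_{SL(ψ)} ≤ 1 }. Then lim_{s→0+} log M(s)/log s = 1 − 1/a and lim_{s→∞} log M(s)/log s = 1 − 1/b; i.e. the Boyd indices of the Bilateral Small Lebesgue space SL(ψ) are γ₁ = 1 − 1/a and γ₂ = 1 − 1/b. -/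

import Mathlib

open MeasureTheory Filter Set
open scoped ENNReal Topology

noncomputable section

/-- The `L_p` norm on `(0,∞)` with Lebesgue measure. -/
def lpNorm (f : ℝ → ℝ) (p : ℝ) : ℝ≥0∞ :=
  (∫⁻ x, ENNReal.ofReal (|f x| ^ p) ∂(volume.restrict (Set.Ioi (0 : ℝ)))) ^ (1 / p)

/-- The conjugate exponent `q' = q/(q-1)`. -/
def conjExp (q : ℝ) : ℝ := q / (q - 1)

/-- A decomposition `g = ∑ₖ gₖ` (a.e. on `(0,∞)`) with exponents `q k ∈ (a,b)`. -/
structure SLDecomp (a b : ℝ) (g : ℝ → ℝ) where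
  gk : ℕ → ℝ → ℝ
  q : ℕ → ℝ
  meas : ∀ k, Measurable (gk k)
  mem : ∀ k, q k ∈ Set.Ioo a b
  sum : ∀ᵐ x ∂(volume.restrict (Set.Ioi (0 : ℝ))), HasSum (fun k => gk k x) (g x)

/-- The cost `∑ₖ ψ(q(k)) |gₖ|_{q(k)'}` of a decomposition. -/
def SLDecomp.cost {a b : ℝ} {g : ℝ → ℝ} (d : SLDecomp a b g) (ψ : ℝ → ℝ) : ℝ≥0∞ :=
  ∑' k, ENNReal.ofReal (ψ (d.q k)) * lpNorm (d.gk k) (conjExp (d.q k))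

/-- The Bilateral Small Lebesgue norm on `(0,∞)`. -/
def smallNorm (ψ : ℝ → ℝ) (a b : ℝ) (g : ℝ → ℝ) : ℝ≥0∞ :=
  ⨅ d : SLDecomp a b g, d.cost ψ

/-- The operator norm of the dilation `σ_s g(x) = g(x/s)` acting on `SL(ψ)`. -/
def dilNorm (ψ : ℝ → ℝ) (a b : ℝ) (s : ℝ) : ℝ≥0∞ :=
  ⨆ (g : ℝ → ℝ) (_ : Measurable g ∧ smallNorm ψ a b g ≤ 1),
    smallNorm ψ a b (fun x => g (x / s))

set_option maxHeartbeats 1000000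

open scoped NNReal

/-- Change of variables `x ↦ x/s` on `(0,∞)`. -/
lemma lintegral_Ioi_comp_div (F : ℝ → ℝ≥0∞) (hF : Measurable F) {s : ℝ} (hs : 0 < s) :
    ∫⁻ x in Set.Ioi (0:ℝ), F (x / s) = ENNReal.ofReal s * ∫⁻ x in Set.Ioi (0:ℝ), F x := by
  have hs' : s⁻¹ ≠ 0 := by positivity
  set H : ℝ → ℝ≥0∞ := (Set.Ioi (0:ℝ)).indicator F with hH
  have hHm : Measurable H := hF.indicator measurableSet_Ioi
  have key : ∀ x : ℝ, (Set.Ioi (0:ℝ)).indicator (fun x => F (x / s)) x = H (s⁻¹ * x) := by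
    intro x
    by_cases hx : x ∈ Set.Ioi (0:ℝ)
    · have : s⁻¹ * x ∈ Set.Ioi (0:ℝ) := by
        simp only [Set.mem_Ioi] at hx ⊢; positivity
      simp [hH, Set.indicator_of_mem, hx, this, div_eq_inv_mul]
    · have : s⁻¹ * x ∉ Set.Ioi (0:ℝ) := by
        simp only [Set.mem_Ioi, not_lt] at hx ⊢
        exact mul_nonpos_of_nonneg_of_nonpos (by positivity) hx
      simp [hH, Set.indicator_of_notMem, hx, this]
  calc ∫⁻ x in Set.Ioi (0:ℝ), F (x / s)
      = ∫⁻ x, (Set.Ioi (0:ℝ)).indicator (fun x => F (x / s)) x :=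
        (lintegral_indicator measurableSet_Ioi _).symm
    _ = ∫⁻ x, H (s⁻¹ * x) := by simp_rw [key]
    _ = ∫⁻ y, H y ∂(Measure.map (s⁻¹ * ·) volume) := by
        rw [lintegral_map hHm (measurable_const_mul _)]
    _ = ENNReal.ofReal s * ∫⁻ y, H y := by
        rw [Real.map_volume_mul_left hs', lintegral_smul_measure]
        congr 1
        rw [inv_inv, abs_of_pos hs]
    _ = ENNReal.ofReal s * ∫⁻ x in Set.Ioi (0:ℝ), F x := by
        rw [← lintegral_indicator measurableSet_Ioi]

lemma lpNorm_comp_div (h : ℝ → ℝ) (hm : Measurable h) {s p : ℝ} (hs : 0 < s) (hp : 0 < p) :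
    lpNorm (fun x => h (x / s)) p = ENNReal.ofReal s ^ (1/p) * lpNorm h p := by
  unfold _root_.lpNorm
  rw [lintegral_Ioi_comp_div (fun x => ENNReal.ofReal (|h x| ^ p)) ?_ hs,
    ENNReal.mul_rpow_of_nonneg _ _ (by positivity)]
  · exact (hm.abs.pow_const p).ennreal_ofReal

/-- Hölder's inequality on `(0,∞)`. -/
lemma holder_Ioi {p : ℝ} (hp : 1 < p) (f g : ℝ → ℝ) (hf : Measurable f) (hg : Measurable g) :
    ∫⁻ x in Set.Ioi (0:ℝ), ENNReal.ofReal |f x| * ENNReal.ofReal |g x|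
      ≤ lpNorm f p * lpNorm g (conjExp p) := by
  have hpq : p.HolderConjugate (conjExp p) := Real.HolderConjugate.conjExponent hp
  have h1 := ENNReal.lintegral_mul_le_Lp_mul_Lq (volume.restrict (Set.Ioi (0:ℝ))) hpq
    (f := fun x => ENNReal.ofReal |f x|) (g := fun x => ENNReal.ofReal |g x|)
    hf.abs.ennreal_ofReal.aemeasurable hg.abs.ennreal_ofReal.aemeasurable
  refine le_trans (le_of_eq ?_) (h1.trans (le_of_eq ?_))
  · rfl
  · unfold _root_.lpNorm
    congr 1 <;> congr 1 <;> refine lintegral_congr fun x => ?_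
    · exact ENNReal.ofReal_rpow_of_nonneg (abs_nonneg _) (by linarith)
    · exact ENNReal.ofReal_rpow_of_nonneg (abs_nonneg _) hpq.symm.nonneg

lemma ofReal_abs_hasSum_le {u : ℕ → ℝ} {t : ℝ} (h : HasSum u t) :
    ENNReal.ofReal |t| ≤ ∑' k, ENNReal.ofReal |u k| := by
  have hcoe : ∀ k, ENNReal.ofReal |u k| = ((‖u k‖₊ : ℝ≥0) : ℝ≥0∞) := fun k =>
    (Real.enorm_eq_ofReal_abs _).symm
  by_cases hs : Summable fun k => |u k|
  · have h1 : |t| ≤ ∑' k, |u k| := by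
      rw [← h.tsum_eq]
      have h2 : Summable fun i => ‖u i‖ := by simpa [Real.norm_eq_abs] using hs
      simpa [Real.norm_eq_abs] using norm_tsum_le_tsum_norm h2
    calc ENNReal.ofReal |t| ≤ ENNReal.ofReal (∑' k, |u k|) := ENNReal.ofReal_le_ofReal h1
      _ = ∑' k, ENNReal.ofReal |u k| :=
        ENNReal.ofReal_tsum_of_nonneg (fun k => abs_nonneg _) hs
  · have htop : ∑' k, ENNReal.ofReal |u k| = ⊤ := by
      by_contra hne
      apply hs
      simp_rw [hcoe] at hne
      have h3 := ENNReal.tsum_coe_ne_top_iff_summable.1 hne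
      have h2 : Summable fun k => ((‖u k‖₊ : ℝ≥0) : ℝ) := NNReal.summable_coe.2 h3
      simpa [Real.norm_eq_abs] using h2
    rw [htop]
    exact le_top

/-- The key duality lower bound: pairing with `f₀` is dominated by the small norm. -/
lemma duality_le_smallNorm {a b : ℝ} (ha : 1 ≤ a) (ψ f₀ : ℝ → ℝ) (hf₀m : Measurable f₀)
    (hf₀ : ∀ p ∈ Set.Ioo a b, lpNorm f₀ p = ENNReal.ofReal (ψ p)) (g : ℝ → ℝ) :
    ∫⁻ x in Set.Ioi (0:ℝ), ENNReal.ofReal |f₀ x| * ENNReal.ofReal |g x|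
      ≤ smallNorm ψ a b g := by
  refine le_iInf fun d => ?_
  calc ∫⁻ x in Set.Ioi (0:ℝ), ENNReal.ofReal |f₀ x| * ENNReal.ofReal |g x|
      ≤ ∫⁻ x in Set.Ioi (0:ℝ), ∑' k, ENNReal.ofReal |f₀ x| * ENNReal.ofReal |d.gk k x| := by
        refine lintegral_mono_ae ?_
        filter_upwards [d.sum] with x hx
        rw [ENNReal.tsum_mul_left]
        exact mul_le_mul_right (ofReal_abs_hasSum_le hx) _
    _ = ∑' k, ∫⁻ x in Set.Ioi (0:ℝ), ENNReal.ofReal |f₀ x| * ENNReal.ofReal |d.gk k x| := by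
        refine lintegral_tsum fun k => ?_
        exact (hf₀m.abs.ennreal_ofReal.mul (d.meas k).abs.ennreal_ofReal).aemeasurable
    _ ≤ ∑' k, ENNReal.ofReal (ψ (d.q k)) * lpNorm (d.gk k) (conjExp (d.q k)) := by
        refine ENNReal.tsum_le_tsum fun k => ?_
        have hq := d.mem k
        have h1 : (1:ℝ) < d.q k := lt_of_le_of_lt ha hq.1
        calc ∫⁻ x in Set.Ioi (0:ℝ), ENNReal.ofReal |f₀ x| * ENNReal.ofReal |d.gk k x|
            ≤ lpNorm f₀ (d.q k) * lpNorm (d.gk k) (conjExp (d.q k)) :=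
              holder_Ioi h1 f₀ (d.gk k) hf₀m (d.meas k)
          _ = ENNReal.ofReal (ψ (d.q k)) * lpNorm (d.gk k) (conjExp (d.q k)) := by
              rw [hf₀ _ hq]
    _ = d.cost ψ := rfl

lemma conjExp_pos {q : ℝ} (h1 : 1 < q) : 0 < conjExp q := by
  unfold conjExp; have : 0 < q - 1 := by linarith
  positivity

lemma one_div_conjExp {q : ℝ} (h1 : 1 < q) : 1 / conjExp q = 1 - 1 / q := by
  unfold conjExp
  have h0 : q ≠ 0 := by linarith
  have h0' : q - 1 ≠ 0 := by intro h; apply h0; linarith [sub_eq_zero.1 h]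
  field_simp

lemma lpNorm_zero {p : ℝ} (hp : 0 < p) : lpNorm (fun _ => 0) p = 0 := by
  unfold _root_.lpNorm
  have : ∀ x : ℝ, ENNReal.ofReal (|(0:ℝ)| ^ p) = 0 := by
    intro x; rw [abs_zero, Real.zero_rpow hp.ne', ENNReal.ofReal_zero]
  simp only [this 0, lintegral_const, zero_mul]
  exact ENNReal.zero_rpow_of_pos (by positivity)

/-- Single-term decomposition upper bound. -/
lemma smallNorm_le_single {a b : ℝ} (ψ : ℝ → ℝ) {q : ℝ} (hq : q ∈ Set.Ioo a b) (h1 : 1 < q)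
    (g : ℝ → ℝ) (hg : Measurable g) :
    smallNorm ψ a b g ≤ ENNReal.ofReal (ψ q) * lpNorm g (conjExp q) := by
  set d : SLDecomp a b g :=
    { gk := fun k => if k = 0 then g else (fun _ => 0)
      q := fun _ => q
      meas := by
        intro k
        by_cases hk : k = 0 <;> simp [hk, hg, measurable_const]
      mem := fun _ => hq
      sum := by
        refine Filter.Eventually.of_forall fun x => ?_
        have := hasSum_ite_eq (0 : ℕ) (g x)
        refine this.congr_fun fun k => ?_
        by_cases hk : k = 0 <;> simp [hk] } with hd
  refine le_trans (iInf_le _ d) (le_of_eq ?_)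
  unfold SLDecomp.cost
  rw [tsum_eq_single 0]
  · simp [hd]
  · intro k hk
    simp only [hd]
    rw [if_neg hk, lpNorm_zero (conjExp_pos h1), mul_zero]

lemma ae_restrict_Ioi_comp_div {P : ℝ → Prop}
    (hP : ∀ᵐ y ∂(volume.restrict (Set.Ioi (0:ℝ))), P y) {s : ℝ} (hs : 0 < s) :
    ∀ᵐ x ∂(volume.restrict (Set.Ioi (0:ℝ))), P (x / s) := by
  rw [ae_iff] at hP ⊢
  rw [Measure.restrict_apply' measurableSet_Ioi] at hP ⊢
  obtain ⟨E, hsub, hEm, hE0⟩ := exists_measurable_superset_of_null hP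
  refine measure_mono_null (t := (· * s⁻¹) ⁻¹' E) ?_ ?_
  · intro x hx
    obtain ⟨hx1, hx2⟩ := hx
    have : x / s ∈ E := hsub ⟨hx1, by simp only [Set.mem_Ioi] at hx2 ⊢; positivity⟩
    simpa [div_eq_mul_inv] using this
  · rw [Real.volume_preimage_mul_right (by positivity), hE0, mul_zero]

/-- Upper bound for the dilation norm. -/
lemma dilNorm_le {a b : ℝ} (ha : 1 ≤ a) (ψ : ℝ → ℝ) {s : ℝ} (hs : 0 < s) {K : ℝ≥0∞}
    (hK0 : K ≠ 0) (hKtop : K ≠ ⊤)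
    (hK : ∀ q ∈ Set.Ioo a b, (ENNReal.ofReal s) ^ (1 - 1/q) ≤ K) :
    dilNorm ψ a b s ≤ K := by
  refine iSup_le fun g => iSup_le fun hp => ?_
  obtain ⟨hgm, hg1⟩ := hp
  have key : ∀ d : SLDecomp a b g, smallNorm ψ a b (fun x => g (x / s)) ≤ K * d.cost ψ := by
    intro d
    set d' : SLDecomp a b (fun x => g (x / s)) :=
      { gk := fun k x => d.gk k (x / s)
        q := d.q
        meas := fun k => (d.meas k).comp (measurable_id.div_const s)
        mem := d.mem
        sum := ae_restrict_Ioi_comp_div d.sum hs } with hd'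
    refine le_trans (iInf_le _ d') ?_
    unfold SLDecomp.cost
    have hterm : ∀ k, ENNReal.ofReal (ψ (d'.q k)) * lpNorm (d'.gk k) (conjExp (d'.q k))
        ≤ K * (ENNReal.ofReal (ψ (d.q k)) * lpNorm (d.gk k) (conjExp (d.q k))) := by
      intro k
      have h1 : (1:ℝ) < d.q k := lt_of_le_of_lt ha (d.mem k).1
      have hlp : lpNorm (d'.gk k) (conjExp (d'.q k))
          = ENNReal.ofReal s ^ (1/(conjExp (d.q k))) * lpNorm (d.gk k) (conjExp (d.q k)) := by
        simp only [hd']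
        exact lpNorm_comp_div (d.gk k) (d.meas k) hs (conjExp_pos h1)
      rw [hlp]
      have : ENNReal.ofReal s ^ (1/(conjExp (d.q k))) ≤ K := by
        rw [one_div_conjExp h1]
        exact hK _ (d.mem k)
      calc ENNReal.ofReal (ψ (d.q k)) *
            (ENNReal.ofReal s ^ (1/(conjExp (d.q k))) * lpNorm (d.gk k) (conjExp (d.q k)))
          = ENNReal.ofReal s ^ (1/(conjExp (d.q k))) *
            (ENNReal.ofReal (ψ (d.q k)) * lpNorm (d.gk k) (conjExp (d.q k))) := by ring
        _ ≤ K * (ENNReal.ofReal (ψ (d.q k)) * lpNorm (d.gk k) (conjExp (d.q k))) :=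
            mul_le_mul_left this _
    calc (∑' k, ENNReal.ofReal (ψ (d'.q k)) * lpNorm (d'.gk k) (conjExp (d'.q k)))
        ≤ ∑' k, K * (ENNReal.ofReal (ψ (d.q k)) * lpNorm (d.gk k) (conjExp (d.q k))) :=
          ENNReal.tsum_le_tsum hterm
      _ = K * d.cost ψ := ENNReal.tsum_mul_left
  have h2 : smallNorm ψ a b (fun x => g (x / s)) ≤ K * smallNorm ψ a b g := by
    have h3 : smallNorm ψ a b (fun x => g (x / s)) ≤ ⨅ d : SLDecomp a b g, K * d.cost ψ :=
      le_iInf key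
    rwa [← ENNReal.mul_iInf_of_ne hK0 hKtop] at h3
  calc smallNorm ψ a b (fun x => g (x / s)) ≤ K * smallNorm ψ a b g := h2
    _ ≤ K * 1 := mul_le_mul_right hg1 _
    _ = K := mul_one K


lemma key_id {A s q q' : ℝ} (hA : 0 < A) (hs : 0 < s) (h1 : 1 < q)
    (hq' : q' = q / (q - 1)) :
    A * ((s ^ (1 - 1/q) / A ^ q) ^ q' * (s⁻¹ * A ^ q)) ^ (1/q') = 1 := by
  have hq0 : q ≠ 0 := by linarith
  have hq1 : (0:ℝ) < q - 1 := by linarith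
  have hq'pos : 0 < q' := by rw [hq']; positivity
  have hq'0 : q' ≠ 0 := hq'pos.ne'
  have he : 1 - 1/q = 1/q' := by rw [hq']; field_simp
  have hAq : (0:ℝ) < A ^ q := Real.rpow_pos_of_pos hA q
  have hB : (0:ℝ) < s ^ (1 - 1/q) / A ^ q := by positivity
  rw [Real.mul_rpow (by positivity) (by positivity),
    Real.mul_rpow (by positivity) (by positivity),
    ← Real.rpow_mul hB.le, mul_one_div_cancel hq'0, Real.rpow_one,
    Real.inv_rpow hs.le, ← Real.rpow_mul hA.le,
    show q * (1/q') = q - 1 by rw [hq']; field_simp]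
  have hApow : A ^ q = A * A ^ (q-1) := by
    have h := Real.rpow_add hA 1 (q-1)
    rw [Real.rpow_one, show (1:ℝ) + (q-1) = q by ring] at h
    exact h
  rw [he]
  have hu : (0:ℝ) < s ^ (1/q') := Real.rpow_pos_of_pos hs _
  field_simp
  rw [hApow]
/-- Lower bound for the dilation norm. -/
lemma dilNorm_lower {a b : ℝ} (ha : 1 ≤ a) (ψ : ℝ → ℝ)
    (hψpos : ∀ p ∈ Set.Ioo a b, 0 < ψ p)
    (f₀ : ℝ → ℝ) (hf₀m : Measurable f₀)
    (hf₀ : ∀ p ∈ Set.Ioo a b, lpNorm f₀ p = ENNReal.ofReal (ψ p))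
    {q : ℝ} (hq : q ∈ Set.Ioo a b) {s : ℝ} (hs : 0 < s) :
    ENNReal.ofReal (s ^ (1 - 1/q)) ≤ dilNorm ψ a b s := by
  have h1 : (1:ℝ) < q := lt_of_le_of_lt ha hq.1
  have hq0 : q ≠ 0 := by linarith
  set A := ψ q with hA_def
  have hA : 0 < A := hψpos q hq
  set q' := conjExp q with hq'_def
  have hq'pos : 0 < q' := conjExp_pos h1
  have hq'0 : q' ≠ 0 := hq'pos.ne'
  have hq1ne : q - 1 ≠ 0 := by intro h; linarith [sub_eq_zero.1 h]
  have hqq' : (q - 1) * q' = q := by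
    rw [hq'_def]; unfold conjExp; field_simp
  -- the integral of |f₀|^q
  have hI : ∫⁻ x in Set.Ioi (0:ℝ), ENNReal.ofReal (|f₀ x| ^ q) = ENNReal.ofReal (A ^ q) := by
    have h := hf₀ q hq
    unfold _root_.lpNorm at h
    have h2 := congrArg (fun z : ℝ≥0∞ => z ^ q) h
    try simp only at h2
    rwa [← ENNReal.rpow_mul, one_div, inv_mul_cancel₀ hq0,
      ENNReal.rpow_one, ENNReal.ofReal_rpow_of_pos hA] at h2
  -- the test function
  set c := s ^ (1 - 1/q) / A ^ q with hc_def
  have hAq : (0:ℝ) < A ^ q := Real.rpow_pos_of_pos hA q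
  have hc : 0 < c := by rw [hc_def]; positivity
  set g : ℝ → ℝ := fun y => c * |f₀ (s * y)| ^ (q - 1) with hg_def
  have hgm : Measurable g := by
    apply measurable_const.mul
    exact ((hf₀m.comp (measurable_const_mul s)).abs.pow_const (q-1))
  have habs : ∀ y : ℝ, |g y| = c * |f₀ (s * y)| ^ (q - 1) := by
    intro y
    rw [hg_def]
    exact abs_of_nonneg (by positivity)
  -- |g|^{q'} pointwise
  have hgq' : ∀ y : ℝ, |g y| ^ q' = c ^ q' * |f₀ (s * y)| ^ q := by
    intro y
    rw [habs y, Real.mul_rpow hc.le (Real.rpow_nonneg (abs_nonneg _) _),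
      ← Real.rpow_mul (abs_nonneg _), hqq']
  -- change of variables for ∫ |f₀(s y)|^q
  have hCV : ∫⁻ y in Set.Ioi (0:ℝ), ENNReal.ofReal (|f₀ (s * y)| ^ q)
      = ENNReal.ofReal s⁻¹ * ENNReal.ofReal (A ^ q) := by
    have hmap := lintegral_Ioi_comp_div (fun x => ENNReal.ofReal (|f₀ x| ^ q))
      ((hf₀m.abs.pow_const q).ennreal_ofReal) (inv_pos.2 hs)
    have heq : ∀ y : ℝ, (fun x => ENNReal.ofReal (|f₀ x| ^ q)) (y / s⁻¹)
        = ENNReal.ofReal (|f₀ (s * y)| ^ q) := by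
      intro y; rw [div_eq_mul_inv, inv_inv, mul_comm]
    simp only [heq] at hmap
    rw [hmap, hI]
  -- the Lp' norm of g
  have hlpg : lpNorm g q' = ENNReal.ofReal ((c ^ q' * (s⁻¹ * A ^ q)) ^ (1/q')) := by
    unfold _root_.lpNorm
    have : ∀ y : ℝ, ENNReal.ofReal (|g y| ^ q')
        = ENNReal.ofReal (c ^ q') * ENNReal.ofReal (|f₀ (s * y)| ^ q) := by
      intro y
      rw [hgq' y, ENNReal.ofReal_mul (by positivity)]
    simp only [this]
    have hFm : Measurable fun y : ℝ => ENNReal.ofReal (|f₀ (s * y)| ^ q) := by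
      exact (((hf₀m.comp (measurable_const_mul s)).abs).pow_const q).ennreal_ofReal
    rw [lintegral_const_mul _ hFm, hCV, ← mul_assoc,
      ← ENNReal.ofReal_mul (by positivity), ← ENNReal.ofReal_mul (by positivity),
      ← ENNReal.ofReal_rpow_of_pos (by positivity), mul_assoc]
  -- g is in the unit ball
  have hsmall : smallNorm ψ a b g ≤ 1 := by
    refine le_trans (smallNorm_le_single ψ hq h1 g hgm) ?_
    rw [hlpg, ← ENNReal.ofReal_mul hA.le]
    rw [hc_def]
    rw [key_id hA hs h1 (by rw [hq'_def]; rfl)]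
    simp
  -- pointwise power identity
  have hpow : ∀ t : ℝ, 0 ≤ t → t * t ^ (q - 1) = t ^ q := by
    intro t ht
    rcases ht.eq_or_lt with h | h
    · rw [← h, zero_mul, Real.zero_rpow hq0]
    · have h2 := Real.rpow_add h 1 (q - 1)
      rw [Real.rpow_one, show (1:ℝ) + (q - 1) = q by ring] at h2
      exact h2.symm
  -- the pairing with f₀ computes exactly
  have hpair : ∫⁻ x in Set.Ioi (0:ℝ), ENNReal.ofReal |f₀ x| * ENNReal.ofReal |g (x / s)|
      = ENNReal.ofReal (s ^ (1 - 1/q)) := by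
    have hpt : ∀ x : ℝ, ENNReal.ofReal |f₀ x| * ENNReal.ofReal |g (x / s)|
        = ENNReal.ofReal c * ENNReal.ofReal (|f₀ x| ^ q) := by
      intro x
      have hx : s * (x / s) = x := by field_simp
      rw [habs (x / s), hx, ENNReal.ofReal_mul hc.le, ← mul_assoc,
        mul_comm (ENNReal.ofReal |f₀ x|) (ENNReal.ofReal c), mul_assoc,
        ← ENNReal.ofReal_mul (abs_nonneg _), hpow _ (abs_nonneg _)]
    simp only [hpt]
    rw [lintegral_const_mul _ ((hf₀m.abs.pow_const q).ennreal_ofReal), hI,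
      ← ENNReal.ofReal_mul hc.le, hc_def, div_mul_cancel₀ _ hAq.ne']
  -- conclude via duality
  have hdual := duality_le_smallNorm ha ψ f₀ hf₀m hf₀ (fun x => g (x / s))
  rw [hpair] at hdual
  refine le_trans hdual ?_
  have hle := le_iSup (fun h : ℝ → ℝ => ⨆ (_ : Measurable h ∧ smallNorm ψ a b h ≤ 1),
    smallNorm ψ a b (fun x => h (x / s))) g
  rw [iSup_pos ⟨hgm, hsmall⟩] at hle
  exact hle

/-- The Boyd indices of the Bilateral Small Lebesgue space `SL(ψ)` on `(0,∞)` are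
`γ₁ = 1 - 1/a` and `γ₂ = 1 - 1/b`. -/
theorem boyd_indices_small (a b : ℝ) (ha : 1 ≤ a) (hab : a < b)
    (ψ : ℝ → ℝ) (hψc : ContinuousOn ψ (Set.Ioo a b))
    (hψinf : ∃ c : ℝ, 0 < c ∧ ∀ p ∈ Set.Ioo a b, c ≤ ψ p)
    (hψblow : Tendsto ψ (𝓝[>] a) atTop ∨ Tendsto ψ (𝓝[<] b) atTop)
    (f₀ : ℝ → ℝ) (hf₀m : Measurable f₀)
    (hf₀ : ∀ p ∈ Set.Ioo a b, lpNorm f₀ p = ENNReal.ofReal (ψ p)) :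
    Tendsto (fun s : ℝ => Real.log (dilNorm ψ a b s).toReal / Real.log s)
      (𝓝[>] 0) (𝓝 (1 - 1 / a)) ∧
    Tendsto (fun s : ℝ => Real.log (dilNorm ψ a b s).toReal / Real.log s)
      atTop (𝓝 (1 - 1 / b)) := by
  obtain ⟨c₀, hc₀, hcle⟩ := hψinf
  have hψpos : ∀ p ∈ Set.Ioo a b, 0 < ψ p := fun p hp => lt_of_lt_of_le hc₀ (hcle p hp)
  have ha0 : (0:ℝ) < a := lt_of_lt_of_le one_pos ha
  have hb1 : (1:ℝ) < b := lt_of_le_of_lt ha hab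
  have hb0 : (0:ℝ) < b := by linarith
  have h1a' : (0:ℝ) ≤ 1 - 1/a := by
    have : 1/a ≤ 1 := by rw [div_le_one ha0]; exact ha
    linarith
  have h1b' : (0:ℝ) ≤ 1 - 1/b := by
    have : 1/b ≤ 1 := by rw [div_le_one hb0]; linarith
    linarith
  have hlow : ∀ q ∈ Set.Ioo a b, ∀ s : ℝ, 0 < s → dilNorm ψ a b s ≠ ⊤ →
      s ^ (1 - 1/q) ≤ (dilNorm ψ a b s).toReal := by
    intro q hq s hs htop
    have h := dilNorm_lower ha ψ hψpos f₀ hf₀m hf₀ hq hs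
    have h2 := ENNReal.toReal_mono htop h
    rwa [ENNReal.toReal_ofReal (Real.rpow_nonneg hs.le _)] at h2
  have huple : ∀ s : ℝ, 0 < s → ∀ e : ℝ, 0 ≤ e → dilNorm ψ a b s ≤ ENNReal.ofReal s ^ e →
      dilNorm ψ a b s ≠ ⊤ ∧ (dilNorm ψ a b s).toReal ≤ s ^ e := by
    intro s hs e he hK
    have hne : (ENNReal.ofReal s : ℝ≥0∞) ^ e ≠ ⊤ :=
      ENNReal.rpow_ne_top_of_nonneg he ENNReal.ofReal_ne_top
    refine ⟨ne_top_of_le_ne_top hne hK, ?_⟩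
    have h2 := ENNReal.toReal_mono hne hK
    rwa [← ENNReal.toReal_rpow, ENNReal.toReal_ofReal hs.le] at h2
  have hup1 : ∀ s : ℝ, 0 < s → s ≤ 1 → dilNorm ψ a b s ≤ ENNReal.ofReal s ^ (1 - 1/a) := by
    intro s hs hs1
    refine dilNorm_le ha ψ hs ?_ ?_ ?_
    · exact (ENNReal.rpow_pos (ENNReal.ofReal_pos.2 hs) ENNReal.ofReal_ne_top).ne'
    · exact ENNReal.rpow_ne_top_of_nonneg h1a' ENNReal.ofReal_ne_top
    · intro q hq
      refine ENNReal.rpow_le_rpow_of_exponent_ge (ENNReal.ofReal_le_one.2 hs1) ?_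
      have h2 : 1/q ≤ 1/a := one_div_le_one_div_of_le ha0 hq.1.le
      linarith
  have hup2 : ∀ s : ℝ, 1 ≤ s → dilNorm ψ a b s ≤ ENNReal.ofReal s ^ (1 - 1/b) := by
    intro s hs1
    have hs : 0 < s := lt_of_lt_of_le one_pos hs1
    refine dilNorm_le ha ψ hs ?_ ?_ ?_
    · exact (ENNReal.rpow_pos (ENNReal.ofReal_pos.2 hs) ENNReal.ofReal_ne_top).ne'
    · exact ENNReal.rpow_ne_top_of_nonneg h1b' ENNReal.ofReal_ne_top
    · intro q hq
      refine ENNReal.rpow_le_rpow_of_exponent_le ?_ ?_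
      · rw [show (1:ℝ≥0∞) = ENNReal.ofReal 1 by simp]
        exact ENNReal.ofReal_le_ofReal hs1
      · have h2 : 1/b ≤ 1/q := one_div_le_one_div_of_le (lt_trans ha0 hq.1) hq.2.le
        linarith
  constructor
  · rw [Metric.tendsto_nhds]
    intro ε hε
    have hmin : 0 < min ((b-a)/2) (ε * a^2 / 2) := lt_min (by linarith) (by positivity)
    set q := a + min ((b-a)/2) (ε * a^2 / 2) with hqdef
    have hqa : a < q := lt_add_of_pos_right a hmin
    have hqb : q < b := by
      have h2 := min_le_left ((b-a)/2) (ε * a^2 / 2)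
      rw [hqdef]; linarith
    have hq : q ∈ Set.Ioo a b := ⟨hqa, hqb⟩
    have hq0 : 0 < q := lt_trans ha0 hqa
    have hgap : (1 - 1/q) - (1 - 1/a) ≤ ε/2 := by
      have h1 : (1 - 1/q) - (1 - 1/a) = (q - a)/(a*q) := by field_simp; ring
      have h2 : q - a ≤ ε * a^2 / 2 := by rw [hqdef]; simpa using min_le_right _ _
      have h3 : (q - a)/(a*q) ≤ (q - a)/(a*a) := by
        have haa : (0:ℝ) < a*a := by positivity
        apply div_le_div_of_nonneg_left ?_ haa ?_ |>.trans_eq rfl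
        · linarith
        · nlinarith
      have h4 : (q - a)/(a*a) ≤ (ε * a^2 / 2)/(a*a) := by gcongr
      have h5 : (ε * a^2 / 2)/(a*a) = ε/2 := by field_simp
      rw [h1]; linarith
    filter_upwards [Ioo_mem_nhdsGT_of_mem (Set.left_mem_Ico.2 one_pos)] with s hs
    obtain ⟨hs0, hs1⟩ := hs
    have hlogs : Real.log s < 0 := Real.log_neg hs0 hs1
    obtain ⟨htop, hTle⟩ := huple s hs0 _ h1a' (hup1 s hs0 hs1.le)
    have hTge := hlow q hq s hs0 htop
    have hTpos : 0 < (dilNorm ψ a b s).toReal :=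
      lt_of_lt_of_le (Real.rpow_pos_of_pos hs0 _) hTge
    have hlog1 : Real.log (dilNorm ψ a b s).toReal ≤ (1 - 1/a) * Real.log s := by
      calc Real.log (dilNorm ψ a b s).toReal ≤ Real.log (s ^ (1 - 1/a)) :=
            (Real.log_le_log_iff hTpos (Real.rpow_pos_of_pos hs0 _)).2 hTle
        _ = (1 - 1/a) * Real.log s := Real.log_rpow hs0 _
    have hlog2 : (1 - 1/q) * Real.log s ≤ Real.log (dilNorm ψ a b s).toReal := by
      calc (1 - 1/q) * Real.log s = Real.log (s ^ (1 - 1/q)) := (Real.log_rpow hs0 _).symm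
        _ ≤ Real.log (dilNorm ψ a b s).toReal :=
            (Real.log_le_log_iff (Real.rpow_pos_of_pos hs0 _) hTpos).2 hTge
    have hphi1 : (1 - 1/a) ≤ Real.log (dilNorm ψ a b s).toReal / Real.log s :=
      (le_div_iff_of_neg hlogs).2 hlog1
    have hphi2 : Real.log (dilNorm ψ a b s).toReal / Real.log s ≤ 1 - 1/q :=
      (div_le_iff_of_neg hlogs).2 hlog2
    rw [Real.dist_eq, abs_of_nonneg (by linarith)]
    linarith
  · rw [Metric.tendsto_nhds]
    intro ε hε
    have hmin : 0 < min ((b-a)/2) (ε/2) := lt_min (by linarith) (by positivity)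
    set q := b - min ((b-a)/2) (ε/2) with hqdef
    have hqb : q < b := by rw [hqdef]; linarith
    have hqa : a < q := by
      have h2 := min_le_left ((b-a)/2) (ε/2)
      rw [hqdef]; linarith
    have hq : q ∈ Set.Ioo a b := ⟨hqa, hqb⟩
    have hq1 : (1:ℝ) ≤ q := le_trans ha hqa.le
    have hq0 : 0 < q := lt_of_lt_of_le one_pos hq1
    have hgap : (1 - 1/b) - (1 - 1/q) ≤ ε/2 := by
      have h1 : (1 - 1/b) - (1 - 1/q) = (b - q)/(q*b) := by field_simp; ring
      have hbq : 0 ≤ b - q := by rw [hqdef]; linarith [hmin.le]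
      have hqb1 : (1:ℝ) ≤ q*b := by nlinarith
      have h3 : (b - q)/(q*b) ≤ (b - q)/1 := by gcongr
      have h4 : b - q ≤ ε/2 := by rw [hqdef]; simpa using min_le_right ((b-a)/2) (ε/2)
      rw [h1]
      calc (b - q)/(q*b) ≤ (b - q)/1 := h3
        _ = b - q := by ring
        _ ≤ ε/2 := h4
    filter_upwards [eventually_gt_atTop (1:ℝ)] with s hs1
    have hs0 : 0 < s := lt_trans one_pos hs1
    have hlogs : 0 < Real.log s := Real.log_pos hs1
    obtain ⟨htop, hTle⟩ := huple s hs0 _ h1b' (hup2 s hs1.le)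
    have hTge := hlow q hq s hs0 htop
    have hTpos : 0 < (dilNorm ψ a b s).toReal :=
      lt_of_lt_of_le (Real.rpow_pos_of_pos hs0 _) hTge
    have hlog1 : Real.log (dilNorm ψ a b s).toReal ≤ (1 - 1/b) * Real.log s := by
      calc Real.log (dilNorm ψ a b s).toReal ≤ Real.log (s ^ (1 - 1/b)) :=
            (Real.log_le_log_iff hTpos (Real.rpow_pos_of_pos hs0 _)).2 hTle
        _ = (1 - 1/b) * Real.log s := Real.log_rpow hs0 _
    have hlog2 : (1 - 1/q) * Real.log s ≤ Real.log (dilNorm ψ a b s).toReal := by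
      calc (1 - 1/q) * Real.log s = Real.log (s ^ (1 - 1/q)) := (Real.log_rpow hs0 _).symm
        _ ≤ Real.log (dilNorm ψ a b s).toReal :=
            (Real.log_le_log_iff (Real.rpow_pos_of_pos hs0 _) hTpos).2 hTge
    have hphi1 : Real.log (dilNorm ψ a b s).toReal / Real.log s ≤ 1 - 1/b :=
      (div_le_iff₀ hlogs).2 (by linarith [hlog1])
    have hphi2 : 1 - 1/q ≤ Real.log (dilNorm ψ a b s).toReal / Real.log s :=
      (le_div_iff₀ hlogs).2 (by linarith [hlog2])
    rw [Real.dist_eq, abs_of_nonpos (by linarith)]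
    linarith

end
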